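/- Let p be an odd prime, q = p^e with e ≥ 2, 1 ≤ t ≤ e-1, 0 ≤ u, v ≤ (p-1)/2, s = (q-1)/2 - (u + v·p^t), and let i be the integer with base-p digits p-1-a in position 0, p-1-b in position t, and p-1 in all other positions, where 0 ≤ a ≤ 2u and 0 ≤ b ≤ 2v. Then C(i, 2s) ≡ (-1)^(a+b) · C(2u, a) · C(2v, b) (mod p). -/

import Mathlib

open Finset

private lemma aux_digit_lemma (p : ℕ) (hp : 1 < p) (c : ℕ → ℕ) (hc : ∀ j, c j < p) :
    ∀ i e, i < e → (∑ j ∈ range e, c j * p ^ j) / p ^ i % p = c i := by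
  intro i
  induction i generalizing c with
  | zero =>
    intro e he
    obtain ⟨e', rfl⟩ : ∃ e', e = e' + 1 := ⟨e - 1, by omega⟩
    rw [Finset.sum_range_succ']
    simp only [pow_zero, Nat.pow_zero, Nat.div_one, mul_one]
    have : ∀ j, c (j + 1) * p ^ (j + 1) = p * (c (j + 1) * p ^ j) := by intro j; ring
    simp_rw [this, ← Finset.mul_sum]
    rw [Nat.mul_add_mod]
    exact Nat.mod_eq_of_lt (hc 0)
  | succ i ih =>
    intro e he
    obtain ⟨e', rfl⟩ : ∃ e', e = e' + 1 := ⟨e - 1, by omega⟩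
    rw [Finset.sum_range_succ']
    have h1 : ∀ j, c (j + 1) * p ^ (j + 1) = p * (c (j + 1) * p ^ j) := by intro j; ring
    simp_rw [h1, ← Finset.mul_sum, pow_zero, mul_one, pow_succ', ← Nat.div_div_eq_div_mul]
    rw [Nat.mul_add_div (by omega), Nat.div_eq_of_lt (hc 0), Nat.add_zero]
    exact ih (fun j => c (j + 1)) (fun j => hc _) e' (by omega)

private lemma aux_sum_lt (p : ℕ) (c : ℕ → ℕ) (hc : ∀ j, c j < p) :
    ∀ e, (∑ j ∈ range e, c j * p ^ j) < p ^ e := by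
  intro e
  induction e with
  | zero => simp
  | succ e ih =>
    rw [Finset.sum_range_succ, pow_succ]
    have h1 : (c e + 1) * p ^ e ≤ p * p ^ e := Nat.mul_le_mul_right _ (hc e)
    rw [add_one_mul] at h1
    have h2 : p * p ^ e = p ^ e * p := mul_comm _ _
    omega

private lemma aux_geom (p : ℕ) (hp : 1 < p) :
    ∀ n, ∑ j ∈ range n, (p - 1) * p ^ j = p ^ n - 1 := by
  intro n
  induction n with
  | zero => simp
  | succ n ih =>
    rw [Finset.sum_range_succ, ih, pow_succ, Nat.sub_one_mul]
    have h3 : p * p ^ n = p ^ n * p := mul_comm _ _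
    have h4 : p ^ n ≤ p * p ^ n := Nat.le_mul_of_pos_left _ (by omega)
    have h5 : 0 < p ^ n := Nat.pow_pos (by omega)
    omega

private lemma aux_digit_choose (p x m : ℕ) (hp : p.Prime) (h : x + m ≤ p - 1) :
    (((p - 1 - x).choose m : ZMod p)) = (-1) ^ m * ((x + m).choose m : ZMod p) := by
  haveI : Fact p.Prime := ⟨hp⟩
  have hp1 : 1 < p := hp.one_lt
  have hfac : ((Nat.factorial m) : ZMod p) ≠ 0 := by
    have : ¬ p ∣ (Nat.factorial m) := by
      intro hd
      have := (Nat.Prime.dvd_factorial hp).mp hd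
      omega
    simpa [ZMod.natCast_eq_zero_iff] using this
  apply mul_right_cancel₀ hfac
  have e1 : ((p - 1 - x).choose m : ZMod p) * ((Nat.factorial m) : ZMod p) =
      (((p - 1 - x).descFactorial m : ℕ) : ZMod p) := by
    rw [Nat.descFactorial_eq_factorial_mul_choose]; push_cast; ring
  have e2 : ((x + m).choose m : ZMod p) * ((Nat.factorial m) : ZMod p) =
      (((x + m).descFactorial m : ℕ) : ZMod p) := by
    rw [Nat.descFactorial_eq_factorial_mul_choose]; push_cast; ring
  rw [e1, mul_assoc, e2]
  rw [Nat.descFactorial_eq_prod_range, Nat.descFactorial_eq_prod_range]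
  push_cast
  rw [← Finset.prod_range_reflect (fun i => ((x + m - i : ℕ) : ZMod p)) m]
  have key : ∀ i ∈ range m, ((p - 1 - x - i : ℕ) : ZMod p)
      = (-1) * ((x + m - (m - 1 - i) : ℕ) : ZMod p) := by
    intro i hi
    rw [Finset.mem_range] at hi
    have h1 : x + m - (m - 1 - i) = x + 1 + i := by omega
    have h2 : (p - 1 - x - i) + (x + 1 + i) = p := by omega
    rw [h1]
    have h3 : ((p - 1 - x - i : ℕ) : ZMod p) + ((x + 1 + i : ℕ) : ZMod p) = 0 := by
      rw [← Nat.cast_add, h2, ZMod.natCast_self]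
    push_cast at h3 ⊢
    linear_combination h3
  rw [Finset.prod_congr rfl key, Finset.prod_mul_distrib]
  simp

private lemma aux_digit_choose' (p x y : ℕ) (hp : p.Prime) (hy : y ≤ p - 1) (hxy : x ≤ y)
    (hyeven : Even y) :
    (((p - 1 - x).choose (p - 1 - y) : ZMod p)) = (-1) ^ x * (y.choose x : ZMod p) := by
  have hp1 : 1 < p := hp.one_lt
  have h1 : p - 1 - y = (p - 1 - x) - (y - x) := by omega
  have h2 : y - x ≤ p - 1 - x := by omega
  rw [h1, Nat.choose_symm h2]
  have := aux_digit_choose p x (y - x) hp (by omega)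
  rw [this]
  have h3 : x + (y - x) = y := by omega
  rw [h3, Nat.choose_symm hxy]
  congr 1
  rcases Nat.even_or_odd x with he | ho
  · have hyx : Even (y - x) := (Nat.even_sub hxy).mpr (by simp [he, hyeven])
    rw [he.neg_one_pow, hyx.neg_one_pow]
  · have hyx : Odd (y - x) := Nat.Even.sub_odd hxy hyeven ho
    rw [ho.neg_one_pow, hyx.neg_one_pow]

theorem stmt_13 (p e t u v s a b : ℕ) (hp : p.Prime) (hodd : Odd p) (he : 2 ≤ e)
    (ht1 : 1 ≤ t) (ht2 : t ≤ e - 1)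
    (hu : u ≤ (p - 1) / 2) (hv : v ≤ (p - 1) / 2)
    (hs : 2 * s = p ^ e - 1 - 2 * (u + v * p ^ t))
    (ha : a ≤ 2 * u) (hb : b ≤ 2 * v) :
    ((∑ j ∈ Finset.range e,
        (if j = 0 then p - 1 - a else if j = t then p - 1 - b else p - 1) * p ^ j).choose
        (2 * s) : ZMod p)
      = (-1) ^ (a + b) * ((2 * u).choose a : ZMod p) * ((2 * v).choose b : ZMod p) := by
  haveI : Fact p.Prime := ⟨hp⟩
  have hp1 : 1 < p := hp.one_lt
  have hpodd : p - 1 = 2 * ((p - 1) / 2) := by obtain ⟨k, hk⟩ := hodd; omega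
  have hu2 : 2 * u ≤ p - 1 := by omega
  have hv2 : 2 * v ≤ p - 1 := by omega
  have ha1 : a ≤ p - 1 := le_trans ha hu2
  have hb1 : b ≤ p - 1 := le_trans hb hv2
  have ht : t < e := by omega
  have ht0 : t ≠ 0 := by omega
  -- key sum identity
  have keysum : ∀ x y : ℕ, x ≤ p - 1 → y ≤ p - 1 →
      (∑ j ∈ range e, (if j = 0 then p - 1 - x else if j = t then p - 1 - y else p - 1) * p ^ j)
        = p ^ e - 1 - x - y * p ^ t := by
    intro x y hx hy
    have expand : ∀ j ∈ range e, (p - 1) * p ^ j =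
        (if j = 0 then p - 1 - x else if j = t then p - 1 - y else p - 1) * p ^ j
          + (if j = 0 then x * p ^ j else 0) + (if j = t then y * p ^ j else 0) := by
      intro j _
      split_ifs with h1 h2 h2 <;>
        first
        | omega
        | (simp only [add_zero, zero_add]; rw [← Nat.add_mul]; congr 1; omega)
    have hsum : (∑ j ∈ range e,
        (if j = 0 then p - 1 - x else if j = t then p - 1 - y else p - 1) * p ^ j)
          + x + y * p ^ t = p ^ e - 1 := by
      rw [← aux_geom p hp1 e, Finset.sum_congr rfl expand, Finset.sum_add_distrib,
        Finset.sum_add_distrib, Finset.sum_ite_eq' (range e) 0 (fun j => x * p ^ j),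
        Finset.sum_ite_eq' (range e) t (fun j => y * p ^ j)]
      simp [Finset.mem_range, ht, (by omega : 0 < e)]
    have hle : x + y * p ^ t ≤ p ^ e - 1 := by omega
    omega
  have hkey := keysum a b ha1 hb1
  have hkey2 := keysum (2 * u) (2 * v) hu2 hv2
  -- 2s equals the digit sum
  have hk_eq : 2 * s = ∑ j ∈ range e,
      (if j = 0 then p - 1 - 2 * u else if j = t then p - 1 - 2 * v else p - 1) * p ^ j := by
    rw [hkey2, hs]
    have h2 : 2 * (u + v * p ^ t) = 2 * u + 2 * (v * p ^ t) := by ring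
    have h3 : 2 * v * p ^ t = 2 * (v * p ^ t) := by ring
    omega
  -- digit functions
  set cN : ℕ → ℕ := fun j => if j = 0 then p - 1 - a else if j = t then p - 1 - b else p - 1
    with hcN
  set cK : ℕ → ℕ := fun j => if j = 0 then p - 1 - 2 * u else if j = t then p - 1 - 2 * v
    else p - 1 with hcK
  have hcNlt : ∀ j, cN j < p := by intro j; simp only [hcN]; split_ifs <;> omega
  have hcKlt : ∀ j, cK j < p := by intro j; simp only [hcK]; split_ifs <;> omega
  have hnlt : (∑ j ∈ range e, cN j * p ^ j) < p ^ e := aux_sum_lt p cN hcNlt e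
  have hklt : 2 * s < p ^ e := by rw [hk_eq]; exact aux_sum_lt p cK hcKlt e
  have lucas := Choose.choose_modEq_prod_range_choose_nat (p := p) hnlt hklt
  have cast1 : (((∑ j ∈ range e, cN j * p ^ j).choose (2 * s) : ℕ) : ZMod p)
      = ((∏ i ∈ range e,
          ((∑ j ∈ range e, cN j * p ^ j) / p ^ i % p).choose (2 * s / p ^ i % p) : ℕ)
        : ZMod p) := (ZMod.natCast_eq_natCast_iff _ _ _).mpr lucas
  rw [cast1]
  push_cast
  have digs : ∀ i ∈ range e,
      ((((∑ j ∈ range e, cN j * p ^ j) / p ^ i % p).choose (2 * s / p ^ i % p) : ℕ) : ZMod p)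
        = (((cN i).choose (cK i) : ℕ) : ZMod p) := by
    intro i hi
    rw [Finset.mem_range] at hi
    rw [aux_digit_lemma p hp1 cN hcNlt i e hi, hk_eq,
      aux_digit_lemma p hp1 cK hcKlt i e hi]
  rw [Finset.prod_congr rfl digs]
  have split : ∀ i ∈ range e, (((cN i).choose (cK i) : ℕ) : ZMod p)
      = (if i = 0 then (((p - 1 - a).choose (p - 1 - 2 * u) : ℕ) : ZMod p) else 1)
        * (if i = t then (((p - 1 - b).choose (p - 1 - 2 * v) : ℕ) : ZMod p) else 1) := by
    intro i _
    have h0t : (0 : ℕ) ≠ t := fun h => ht0 h.symm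
    by_cases h0 : i = 0
    · subst h0
      simp [hcN, hcK, h0t]
    · by_cases hjt : i = t
      · subst hjt
        simp [hcN, hcK, h0]
      · simp [hcN, hcK, h0, hjt]
  rw [Finset.prod_congr rfl split, Finset.prod_mul_distrib,
    Finset.prod_ite_eq' (range e) 0
      (fun _ => (((p - 1 - a).choose (p - 1 - 2 * u) : ℕ) : ZMod p)),
    Finset.prod_ite_eq' (range e) t
      (fun _ => (((p - 1 - b).choose (p - 1 - 2 * v) : ℕ) : ZMod p))]
  rw [if_pos (Finset.mem_range.mpr (by omega : 0 < e)), if_pos (Finset.mem_range.mpr ht)]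
  rw [aux_digit_choose' p a (2 * u) hp hu2 ha (even_two_mul u),
    aux_digit_choose' p b (2 * v) hp hv2 hb (even_two_mul v)]
  rw [pow_add]
  ring
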